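/- Let Y, A be {0,1}-valued random variables and X a random variable in a measurable space, and let R be a version of E[Y | σ(X,A)] (the Bayes optimal regressor). Let Ŷ be any randomized predictor based on (X, A), i.e., there is a measurable f : (range of X) × {0,1} → [0,1] with P(Ŷ=1 | σ(X,A)) = f(X,A) a.s. and Ŷ conditionally independent of Y given σ(X,A). Then there exists a measurable g : [0,1] × {0,1} → [0,1] such that the predictor Y* derived from (R, A) with P(Y*=1 | σ(X,A,R)) = g(R,A) and value conditionally independent of (Y, X) given (R, A) has the same joint distribution with (A, Y) as Ŷ does; concretely, for all a, y, E[ g(R,A) · 1{A=a, Y=y} ] = P(Ŷ=1, A=a, Y=y). -/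

import Mathlib

open MeasureTheory ProbabilityTheory
open scoped ENNReal

/-- The σ-algebra generated by a pair of random variables. -/
def pairSigma {Ω β γ : Type*} [MeasurableSpace β] [MeasurableSpace γ]
    (X : Ω → β) (A : Ω → γ) : MeasurableSpace Ω :=
  MeasurableSpace.comap (fun ω => (X ω, A ω)) inferInstance

/-- Let `R` be a version of `E[Y ∣ σ(X,A)]` (Bayes optimal regressor
for a binary target `Y`), and let `Ŷ` be any randomized predictor based on `(X,A)`,
i.e. `P(Ŷ=1 ∣ σ(X,A)) = f(X,A)` a.s. for a measurable `f` into `[0,1]`, with `Ŷ`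
conditionally independent of `Y` given `σ(X,A)`. Then there is a measurable
`g : ℝ × {0,1} → [0,1]` such that the predictor derived from `(R,A)` with acceptance
probability `g(R,A)` has the same joint distribution with `(A,Y)` as `Ŷ`:
`E[g(R,A) · 1{A=a, Y=y}] = P(Ŷ=1, A=a, Y=y)` for all `a, y`. -/
theorem derived_predictor_same_joint_distribution
    {Ω β : Type*} [MeasurableSpace Ω] [MeasurableSpace β]
    (μ : Measure Ω) [IsProbabilityMeasure μ]
    (Y : Ω → Bool) (X : Ω → β) (A : Ω → Bool) (R : Ω → ℝ) (Yh : Ω → Bool)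
    (hY : Measurable Y) (hX : Measurable X) (hA : Measurable A) (hYh : Measurable Yh)
    (hRmeas : Measurable[pairSigma X A] R)
    (hR : R =ᵐ[μ] μ[fun ω => if Y ω then (1:ℝ) else 0 | pairSigma X A])
    (f : β × Bool → ℝ) (hf : Measurable f) (hf01 : ∀ z, f z ∈ Set.Icc (0:ℝ) 1)
    (hYhf : (μ[Set.indicator {ω | Yh ω = true} (fun _ => (1:ℝ)) | pairSigma X A])
      =ᵐ[μ] fun ω => f (X ω, A ω))
    (hci : ∀ y : Bool,
      (μ[Set.indicator ({ω | Yh ω = true} ∩ {ω | Y ω = y}) (fun _ => (1:ℝ)) |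
          pairSigma X A]) =ᵐ[μ]
        fun ω =>
          (μ[Set.indicator {ω' | Yh ω' = true} (fun _ => (1:ℝ)) | pairSigma X A]) ω *
            (μ[Set.indicator {ω' | Y ω' = y} (fun _ => (1:ℝ)) | pairSigma X A]) ω) :
    ∃ g : ℝ × Bool → ℝ, Measurable g ∧ (∀ z, g z ∈ Set.Icc (0:ℝ) 1) ∧
      ∀ a y : Bool,
        ∫ ω in {ω | A ω = a ∧ Y ω = y}, g (R ω, A ω) ∂μ =
          (μ {ω | Yh ω = true ∧ A ω = a ∧ Y ω = y}).toReal := by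
  classical
  have hXA : Measurable fun ω => (X ω, A ω) := hX.prodMk hA
  have hm2 : (pairSigma X A) ≤ ‹MeasurableSpace Ω› := hXA.comap_le
  haveI hσ : SigmaFinite (μ.trim hm2) := inferInstance
  have hRm : Measurable R := hRmeas.mono hm2 le_rfl
  have hXAm2 : Measurable[(pairSigma X A)] fun ω => (X ω, A ω) :=
    Measurable.of_comap_le le_rfl
  have hAm2 : Measurable[(pairSigma X A)] A := measurable_snd.comp hXAm2
  set T : Ω → ℝ × Bool := fun ω => (R ω, A ω) with hTdef
  have hTmeas : Measurable T := hRm.prodMk hA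
  have hTm2 : Measurable[(pairSigma X A)] T := hRmeas.prodMk hAm2
  -- the pushforward measures
  set F := fun ω => Real.toNNReal (f (X ω, A ω)) with hFdef
  have hFmeas : Measurable F := (hf.comp hXA).real_toNNReal
  set ν : Measure (ℝ × Bool) := μ.map T with hνdef
  set ρ : Measure (ℝ × Bool) := (μ.withDensity fun ω => (F ω : ℝ≥0∞)).map T with hρdef
  haveI : IsProbabilityMeasure ν := Measure.isProbabilityMeasure_map hTmeas.aemeasurable
  have hwd_le : (μ.withDensity fun ω => (F ω : ℝ≥0∞)) ≤ μ := by
    have h1 : (fun ω => (F ω : ℝ≥0∞)) ≤ᵐ[μ] fun _ => (1 : ℝ≥0∞) := by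
      refine Filter.Eventually.of_forall fun ω => ?_
      simp only [ENNReal.coe_le_one_iff, hFdef]
      exact Real.toNNReal_le_one.mpr (hf01 _).2
    calc (μ.withDensity fun ω => (F ω : ℝ≥0∞)) ≤ μ.withDensity (fun _ => 1) :=
          withDensity_mono h1
      _ = μ := by simpa using withDensity_one (μ := μ)
  have hρν : ρ ≤ ν := Measure.map_mono hwd_le hTmeas
  haveI : IsFiniteMeasure ρ := isFiniteMeasure_of_le ν hρν
  have hρνac : ρ ≪ ν := Measure.absolutelyContinuous_of_le hρν
  -- the derived acceptance probability
  set g : ℝ × Bool → ℝ := fun z => min ((ρ.rnDeriv ν z).toReal) 1 with hgdef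
  have hg : Measurable g := (Measure.measurable_rnDeriv ρ ν).ennreal_toReal.min measurable_const
  have hg01 : ∀ z, g z ∈ Set.Icc (0:ℝ) 1 :=
    fun z => ⟨le_min ENNReal.toReal_nonneg zero_le_one, min_le_right _ _⟩
  have hg_ae : (fun z => g z) =ᵐ[ν] fun z => (ρ.rnDeriv ν z).toReal := by
    filter_upwards [Measure.rnDeriv_le_one_of_le hρν] with z hz
    have : (ρ.rnDeriv ν z).toReal ≤ 1 := by
      simpa using ENNReal.toReal_mono ENNReal.one_ne_top hz
    simp [hgdef, min_eq_left this]
  -- the key transfer identity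
  have hK : ∀ h : ℝ × Bool → ℝ, Measurable h →
      ∫ ω, g (T ω) * h (T ω) ∂μ = ∫ ω, f (X ω, A ω) * h (T ω) ∂μ := by
    intro h hh
    have e1 : ∫ ω, g (T ω) * h (T ω) ∂μ = ∫ z, g z * h z ∂ν := by
      rw [hνdef, integral_map (f := fun z => g z * h z) hTmeas.aemeasurable ((hg.mul hh).aestronglyMeasurable)]
    have e2 : ∫ z, g z * h z ∂ν = ∫ z, (ρ.rnDeriv ν z).toReal * h z ∂ν := by
      refine integral_congr_ae ?_
      filter_upwards [hg_ae] with z hz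
      rw [hz]
    have e3 : ∫ z, (ρ.rnDeriv ν z).toReal * h z ∂ν = ∫ z, h z ∂ρ := by
      simpa [smul_eq_mul] using integral_rnDeriv_smul (f := h) hρνac
    have e4 : ∫ z, h z ∂ρ = ∫ ω, h (T ω) ∂(μ.withDensity fun ω => (F ω : ℝ≥0∞)) := by
      rw [hρdef, integral_map hTmeas.aemeasurable hh.aestronglyMeasurable]
    have e5 : ∫ ω, h (T ω) ∂(μ.withDensity fun ω => (F ω : ℝ≥0∞)) =
        ∫ ω, f (X ω, A ω) * h (T ω) ∂μ := by
      rw [integral_withDensity_eq_integral_smul hFmeas]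
      refine integral_congr_ae (Filter.Eventually.of_forall fun ω => ?_)
      simp [NNReal.smul_def, hFdef, Real.coe_toNNReal _ (hf01 (X ω, A ω)).1]
    rw [e1, e2, e3, e4, e5]
  -- conditional expectations of the indicator of Y = y
  set I : Set Ω → Ω → ℝ := fun S => Set.indicator S (fun _ => (1:ℝ)) with hIdef
  have hIint : ∀ S : Set Ω, MeasurableSet S → Integrable (I S) μ := fun S hS =>
    (integrable_const (1:ℝ)).indicator hS
  have hYset : ∀ y : Bool, MeasurableSet {ω | Y ω = y} := fun y =>
    hY (measurableSet_singleton y)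
  set q : Bool → Ω → ℝ := fun y => μ[I {ω | Y ω = y} | (pairSigma X A)] with hqdef
  have hq_true : R =ᵐ[μ] q true := by
    have : (fun ω => if Y ω then (1:ℝ) else 0) = I {ω | Y ω = true} := by
      funext ω; by_cases hω : Y ω = true <;> simp [hIdef, Set.indicator, hω]
    rw [hqdef]; rw [this] at hR; exact hR
  have hq_nonneg : (0:Ω → ℝ) ≤ᵐ[μ] q true :=
    condExp_nonneg (Filter.Eventually.of_forall fun ω => Set.indicator_nonneg (by simp) ω)
  have hq_le_one : q true ≤ᵐ[μ] fun _ => (1:ℝ) := by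
    have h1 : q true ≤ᵐ[μ] μ[(fun _ => (1:ℝ)) | (pairSigma X A)] :=
      condExp_mono (hIint _ (hYset true)) (integrable_const 1)
        (Filter.Eventually.of_forall fun ω => Set.indicator_le_self' (by simp) ω)
    calc q true ≤ᵐ[μ] μ[(fun _ => (1:ℝ)) | (pairSigma X A)] := h1
      _ =ᵐ[μ] fun _ => (1:ℝ) := by rw [condExp_const hm2]
  have hq_false : q false =ᵐ[μ] fun ω => 1 - q true ω := by
    have hfun : I {ω | Y ω = false} = fun ω => (fun _ => (1:ℝ)) ω - I {ω | Y ω = true} ω := by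
      funext ω; by_cases hω : Y ω = true <;>
        simp [hIdef, Set.indicator, hω, Bool.not_eq_true] at * <;> simp [hω]
    calc q false = μ[(fun ω => (fun _ => (1:ℝ)) ω - I {ω | Y ω = true} ω) | (pairSigma X A)] := by
          simp only [hqdef]; rw [hfun]
      _ =ᵐ[μ] μ[(fun _ => (1:ℝ)) | (pairSigma X A)] - μ[I {ω | Y ω = true} | (pairSigma X A)] :=
          condExp_sub (integrable_const 1) (hIint _ (hYset true)) _
      _ =ᵐ[μ] fun ω => 1 - q true ω := by
          rw [condExp_const hm2]; exact Filter.Eventually.of_forall fun ω => by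
            simp [hqdef, Pi.sub_apply]
  -- the comparison functions on ℝ × Bool
  set clamp : ℝ → ℝ := fun t => max 0 (min t 1) with hclampdef
  have hclamp : Measurable clamp := measurable_const.max (measurable_id.min measurable_const)
  set k : Bool → Bool → ℝ × Bool → ℝ := fun a y z =>
    (if z.2 = a then (1:ℝ) else 0) * (if y then clamp z.1 else 1 - clamp z.1) with hkdef
  have hk : ∀ a y, Measurable (k a y) := by
    intro a y
    refine Measurable.mul ?_ ?_
    · exact measurable_const.ite (measurable_snd (measurableSet_singleton a)) measurable_const
    · cases y
      · exact measurable_const.sub (hclamp.comp measurable_fst)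
      · exact hclamp.comp measurable_fst
  set J : Bool → Ω → ℝ := fun a ω => if A ω = a then (1:ℝ) else 0 with hJdef
  have hE : ∀ a y, (fun ω => k a y (T ω)) =ᵐ[μ] fun ω => J a ω * q y ω := by
    intro a y
    filter_upwards [hq_true, hq_nonneg, hq_le_one, hq_false] with ω h1 h2 h3 h4
    have hcl : clamp (R ω) = q true ω := by
      have h2' : (0:ℝ) ≤ q true ω := h2
      have h3' : q true ω ≤ 1 := h3
      rw [h1]
      simp only [hclampdef]
      rw [min_eq_left h3', max_eq_right h2']
    cases y
    · simp only [hkdef, hJdef, hTdef, h4]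
      simp [hcl]
    · simp only [hkdef, hJdef, hTdef]
      simp [hcl]
  -- measurability/integrability of g ∘ T
  set gT : Ω → ℝ := fun ω => g (T ω) with hgTdef
  have hgTm2 : StronglyMeasurable[(pairSigma X A)] gT := (hg.comp hTm2).stronglyMeasurable
  have hgTm : Measurable gT := hg.comp hTmeas
  have hbdd : ∀ {φ : Ω → ℝ}, AEStronglyMeasurable φ μ → (∀ ω, |φ ω| ≤ 1) → Integrable φ μ := by
    intro φ hm hb
    exact ⟨hm, HasFiniteIntegral.of_bounded (C := 1)
      (Filter.Eventually.of_forall fun ω => by simpa [Real.norm_eq_abs] using hb ω)⟩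
  refine ⟨g, hg, hg01, fun a y => ?_⟩
  -- the (pairSigma X A)-measurable set {A = a}
  set Sa : Set Ω := A ⁻¹' {a} with hSadef
  have hSa2 : MeasurableSet[(pairSigma X A)] Sa := hAm2 (measurableSet_singleton a)
  have hSa : MeasurableSet Sa := hm2 _ hSa2
  have hYy : MeasurableSet {ω | Y ω = y} := hYset y
  -- integrability facts
  have hIYy : Integrable (I {ω | Y ω = y}) μ := hIint _ hYy
  have hIm : Measurable (I {ω | Y ω = y}) := measurable_const.indicator hYy
  have hgTIYy : Integrable (fun ω => gT ω * I {ω | Y ω = y} ω) μ := by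
    refine hbdd (hgTm.mul hIm).aestronglyMeasurable fun ω => ?_
    have h1 : |gT ω| ≤ 1 := abs_le.mpr ⟨by linarith [(hg01 (T ω)).1], (hg01 (T ω)).2⟩
    have h2 : |I {ω | Y ω = y} ω| ≤ 1 := by
      simp only [hIdef, Set.indicator]; split <;> simp
    calc |gT ω * I {ω | Y ω = y} ω| = |gT ω| * |I {ω | Y ω = y} ω| := abs_mul _ _
      _ ≤ 1 * 1 := mul_le_mul h1 h2 (abs_nonneg _) zero_le_one
      _ = 1 := one_mul 1
  -- Step A: LHS as a set integral over Sa against q y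
  have stepA : ∫ ω in {ω | A ω = a ∧ Y ω = y}, g (R ω, A ω) ∂μ
      = ∫ ω in Sa, gT ω * q y ω ∂μ := by
    have hset : {ω | A ω = a ∧ Y ω = y} = Sa ∩ {ω | Y ω = y} := by
      ext ω
      simp only [hSadef, Set.mem_inter_iff, Set.mem_preimage, Set.mem_singleton_iff,
        Set.mem_setOf_eq]
    have e1 : ∫ ω in {ω | A ω = a ∧ Y ω = y}, g (R ω, A ω) ∂μ
        = ∫ ω in Sa ∩ {ω | Y ω = y}, gT ω ∂μ := by rw [hset]
    have e2 : ∫ ω in Sa ∩ {ω | Y ω = y}, gT ω ∂μ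
        = ∫ ω in Sa, Set.indicator {ω | Y ω = y} gT ω ∂μ := (setIntegral_indicator hYy).symm
    have e3 : ∫ ω in Sa, Set.indicator {ω | Y ω = y} gT ω ∂μ
        = ∫ ω in Sa, gT ω * I {ω | Y ω = y} ω ∂μ := by
      refine setIntegral_congr_ae hSa (Filter.Eventually.of_forall fun ω _ => ?_)
      by_cases hω : ω ∈ {ω | Y ω = y} <;> simp [hIdef, Set.indicator, hω]
    have e4 : ∫ ω in Sa, gT ω * I {ω | Y ω = y} ω ∂μ
        = ∫ ω in Sa, (μ[(fun ω => gT ω * I {ω | Y ω = y} ω) | (pairSigma X A)]) ω ∂μ :=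
      (setIntegral_condExp hm2 hgTIYy hSa2).symm
    have e5 : ∫ ω in Sa, (μ[(fun ω => gT ω * I {ω | Y ω = y} ω) | (pairSigma X A)]) ω ∂μ
        = ∫ ω in Sa, gT ω * q y ω ∂μ := by
      refine setIntegral_congr_ae hSa ?_
      have hmul : μ[(fun ω => gT ω * I {ω | Y ω = y} ω) | (pairSigma X A)] =ᵐ[μ]
          fun ω => gT ω * q y ω := by
        have := condExp_mul_of_stronglyMeasurable_left (μ := μ) hgTm2
          hgTIYy hIYy
        refine this.trans (Filter.Eventually.of_forall fun ω => ?_)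
        simp [hqdef, Pi.mul_apply]
      filter_upwards [hmul] with ω hω _
      exact hω
    rw [e1, e2, e3, e4, e5]
  -- Step B: transfer from gT to f using hK
  have hJind : ∀ ψ : Ω → ℝ, ∫ ω in Sa, ψ ω ∂μ = ∫ ω, J a ω * ψ ω ∂μ := by
    intro ψ
    rw [← integral_indicator hSa]
    refine integral_congr_ae (Filter.Eventually.of_forall fun ω => ?_)
    by_cases hω : ω ∈ Sa
    · have hωa : A ω = a := by simpa [hSadef] using hω
      simp [Set.indicator, hω, hJdef, hωa]
    · have hωa : ¬ A ω = a := by simpa [hSadef] using hω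
      simp [Set.indicator, hω, hJdef, hωa]
  have stepB : ∫ ω in Sa, gT ω * q y ω ∂μ = ∫ ω in Sa, f (X ω, A ω) * q y ω ∂μ := by
    have b1 : ∫ ω in Sa, gT ω * q y ω ∂μ = ∫ ω, gT ω * k a y (T ω) ∂μ := by
      rw [hJind]
      refine integral_congr_ae ?_
      filter_upwards [hE a y] with ω hω
      rw [hω]; ring
    have b2 : ∫ ω, f (X ω, A ω) * k a y (T ω) ∂μ = ∫ ω in Sa, f (X ω, A ω) * q y ω ∂μ := by
      rw [hJind]
      refine integral_congr_ae ?_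
      filter_upwards [hE a y] with ω hω
      rw [hω]; ring
    rw [b1, ← b2]
    exact hK (k a y) (hk a y)
  -- Step C: identify with the measure of the target set
  have stepC : ∫ ω in Sa, f (X ω, A ω) * q y ω ∂μ
      = (μ {ω | Yh ω = true ∧ A ω = a ∧ Y ω = y}).toReal := by
    have hYhset : MeasurableSet {ω | Yh ω = true} := hYh (measurableSet_singleton true)
    have hUset : MeasurableSet ({ω | Yh ω = true} ∩ {ω | Y ω = y}) := hYhset.inter hYy
    have c1 : ∫ ω in Sa, f (X ω, A ω) * q y ω ∂μ
        = ∫ ω in Sa, (μ[I ({ω | Yh ω = true} ∩ {ω | Y ω = y}) | (pairSigma X A)]) ω ∂μ := by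
      refine setIntegral_congr_ae hSa ?_
      filter_upwards [hYhf, hci y] with ω h1 h2 _
      rw [hIdef]
      rw [h2, ← h1]
    have c2 : ∫ ω in Sa, (μ[I ({ω | Yh ω = true} ∩ {ω | Y ω = y}) | (pairSigma X A)]) ω ∂μ
        = ∫ ω in Sa, I ({ω | Yh ω = true} ∩ {ω | Y ω = y}) ω ∂μ :=
      setIntegral_condExp hm2 (hIint _ hUset) hSa2
    have c3 : ∫ ω in Sa, I ({ω | Yh ω = true} ∩ {ω | Y ω = y}) ω ∂μ
        = (μ (Sa ∩ ({ω | Yh ω = true} ∩ {ω | Y ω = y}))).toReal := by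
      rw [hIdef, setIntegral_indicator hUset, setIntegral_const]
      simp [Measure.real]
    have hset : Sa ∩ ({ω | Yh ω = true} ∩ {ω | Y ω = y})
        = {ω | Yh ω = true ∧ A ω = a ∧ Y ω = y} := by
      ext ω; simp [hSadef]; tauto
    rw [c1, c2, c3, hset]
  rw [stepA, stepB, stepC]
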